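/- In PSL₂(ℝ), the square of the conjugacy class of the image of diag(λ, λ⁻¹) (λ > 1) is the whole group: for every g ∈ PSL₂(ℝ) there exist h₁, h₂ in that conjugacy class with h₁h₂ = g. -/

import Mathlib

open Matrix

/-- PSL₂(ℝ) = SL₂(ℝ)/{±I} (the center of SL₂(ℝ) is {±I}). -/
abbrev PSL2R := Matrix.SpecialLinearGroup (Fin 2) ℝ ⧸
  Subgroup.center (Matrix.SpecialLinearGroup (Fin 2) ℝ)

abbrev SL2R := Matrix.SpecialLinearGroup (Fin 2) ℝ

def mk2 (a b c d : ℝ) (h : a * d - b * c = 1) : SL2R :=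
  ⟨!![a, b; c, d], by rw [Matrix.det_fin_two_of]; exact h⟩

@[simp] lemma mk2_val (a b c d : ℝ) (h : a * d - b * c = 1) :
    (mk2 a b c d h).val = !![a, b; c, d] := rfl

lemma mem_center_of_val_neg_one (E : SL2R) (hE : E.val = -1) :
    E ∈ Subgroup.center SL2R := by
  rw [Subgroup.mem_center_iff]
  intro H
  apply Subtype.ext
  show H.val * E.val = E.val * H.val
  rw [hE, mul_neg_one, neg_one_mul]

/-- If the value of C is minus that of B, they agree in PSL₂(ℝ). -/
lemma mk_eq_mk_of_neg (B C : SL2R) (h : C.val = -B.val) :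
    (QuotientGroup.mk C : PSL2R) = QuotientGroup.mk B := by
  have hBv : B.val = -C.val := by rw [h, neg_neg]
  have hCB : C⁻¹ * B ∈ Subgroup.center SL2R := by
    apply mem_center_of_val_neg_one
    have h1 : (C⁻¹ * B).val = -((C⁻¹ * C).val) := by
      show C⁻¹.val * B.val = -(C⁻¹.val * C.val)
      rw [hBv, mul_neg]
    rw [h1, inv_mul_cancel]
    show -(1 : SL2R).val = -1
    norm_num
  rw [QuotientGroup.eq]
  exact hCB

/-- Key conjugacy lemma: any SL₂(ℝ) matrix of trace `l + l⁻¹` (with `l > 1`)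
is SL₂(ℝ)-conjugate to `D = diag(l, l⁻¹)`. -/
lemma key (l : ℝ) (hl : 1 < l) (D : SL2R) (hD : D.val = !![l, 0; 0, l⁻¹])
    (M : SL2R) (htr : M.val 0 0 + M.val 1 1 = l + l⁻¹) : IsConj D M := by
  have l0 : l ≠ 0 := by positivity
  have hinv : l⁻¹ < 1 := by
    rw [inv_lt_one_iff₀]; right; exact hl
  have hll : l - l⁻¹ ≠ 0 := by
    have : l⁻¹ < l := lt_trans hinv hl
    exact sub_ne_zero.mpr (ne_of_gt this)
  set a := M.val 0 0 with ha
  set b := M.val 0 1 with hb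
  set c := M.val 1 0 with hc
  set d := M.val 1 1 with hdd
  have hM : M.val = !![a, b; c, d] := by
    rw [ha, hb, hc, hdd]; exact Matrix.eta_fin_two M.val
  have hdet : a * d - b * c = 1 := by
    have := M.2
    rw [hM, Matrix.det_fin_two_of] at this
    exact this
  have hd' : d = l + l⁻¹ - a := by linarith
  rw [isConj_iff]
  by_cases hc0 : c ≠ 0
  · -- use eigenvectors (l - d, c) and (l⁻¹ - d, c)/Δ
    have hΔ : c * (l - l⁻¹) ≠ 0 := mul_ne_zero hc0 hll
    have hdetP : (l - d) * (c / (c * (l - l⁻¹))) -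
        ((l⁻¹ - d) / (c * (l - l⁻¹))) * c = 1 := by
      have h1 : (l - d) * (c / (c * (l - l⁻¹))) -
          ((l⁻¹ - d) / (c * (l - l⁻¹))) * c = (c * (l - l⁻¹)) / (c * (l - l⁻¹)) := by
        ring
      rw [h1, div_self hΔ]
    have hli : l * l⁻¹ = 1 := mul_inv_cancel₀ l0
    have hli' : l⁻¹ * l = 1 := by rw [mul_comm]; exact hli
    refine ⟨mk2 (l - d) ((l⁻¹ - d) / (c * (l - l⁻¹))) c (c / (c * (l - l⁻¹))) hdetP, ?_⟩
    rw [mul_inv_eq_iff_eq_mul]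
    apply Subtype.ext
    show _ * D.val = M.val * _
    rw [hD, hM, mk2_val, Matrix.mul_fin_two, Matrix.mul_fin_two]
    refine Matrix.ext fun i j => ?_
    fin_cases i <;> fin_cases j
    · show (l-d)*l + (l⁻¹-d)/(c*(l-l⁻¹))*0 = a*(l-d) + b*c
      linear_combination hdet - l * htr - hli
    · show (l-d)*0 + (l⁻¹-d)/(c*(l-l⁻¹))*l⁻¹ = a*((l⁻¹-d)/(c*(l-l⁻¹))) + b*(c/(c*(l-l⁻¹)))
      linear_combination (hdet - l⁻¹ * htr - hli') / (c*(l-l⁻¹))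
    · show c*l + c/(c*(l-l⁻¹))*0 = c*(l-d) + d*c
      ring
    · show c*0 + c/(c*(l-l⁻¹))*l⁻¹ = c*((l⁻¹-d)/(c*(l-l⁻¹))) + d*(c/(c*(l-l⁻¹)))
      ring
  · push_neg at hc0
    by_cases hb0 : b ≠ 0
    · have hll' : l⁻¹ - l ≠ 0 := by intro h; apply hll; linarith
      have hΔ : b * (l⁻¹ - l) ≠ 0 := mul_ne_zero hb0 hll'
      have hdetP : b * ((l⁻¹ - a) / (b * (l⁻¹ - l))) -
          (b / (b * (l⁻¹ - l))) * (l - a) = 1 := by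
        have h1 : b * ((l⁻¹ - a) / (b * (l⁻¹ - l))) -
            (b / (b * (l⁻¹ - l))) * (l - a) = (b * (l⁻¹ - l)) / (b * (l⁻¹ - l)) := by
          ring
        rw [h1, div_self hΔ]
      have hli : l * l⁻¹ = 1 := mul_inv_cancel₀ l0
      have hli' : l⁻¹ * l = 1 := by rw [mul_comm]; exact hli
      refine ⟨mk2 b (b / (b * (l⁻¹ - l))) (l - a) ((l⁻¹ - a) / (b * (l⁻¹ - l))) hdetP, ?_⟩
      rw [mul_inv_eq_iff_eq_mul]
      apply Subtype.ext
      show _ * D.val = M.val * _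
      rw [hD, hM, mk2_val, Matrix.mul_fin_two, Matrix.mul_fin_two]
      refine Matrix.ext fun i j => ?_
      fin_cases i <;> fin_cases j
      · show b*l + b/(b*(l⁻¹-l))*0 = a*b + b*(l-a)
        ring
      · show b*0 + b/(b*(l⁻¹-l))*l⁻¹ = a*(b/(b*(l⁻¹-l))) + b*((l⁻¹-a)/(b*(l⁻¹-l)))
        ring
      · show (l-a)*l + (l⁻¹-a)/(b*(l⁻¹-l))*0 = c*b + d*(l-a)
        linear_combination hdet - l * htr - hli
      · show (l-a)*0 + (l⁻¹-a)/(b*(l⁻¹-l))*l⁻¹ = c*(b/(b*(l⁻¹-l))) + d*((l⁻¹-a)/(b*(l⁻¹-l)))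
        linear_combination (hdet - l⁻¹ * htr - hli') / (b*(l⁻¹-l))
    · push_neg at hb0
      -- M is diagonal: a = l or a = l⁻¹
      have hfac : (a - l) * (a - l⁻¹) = 0 := by
        have h1 : a * d = 1 := by rw [hb0] at hdet; linarith [hdet]
        have h2 : a * (l + l⁻¹ - a) = 1 := by rw [← hd']; exact h1
        have hli : l * l⁻¹ = 1 := mul_inv_cancel₀ l0
        nlinarith [h2, hli]
      rcases mul_eq_zero.mp hfac with h | h
      · have hal : a = l := by have := sub_eq_zero.mp h; linarith
        refine ⟨1, ?_⟩
        apply Subtype.ext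
        show (1 : SL2R).val * D.val * (1 : SL2R)⁻¹.val = M.val
        rw [inv_one]
        show 1 * D.val * 1 = M.val
        rw [one_mul, mul_one, hD, hM, hb0, hc0, hal, hd', hal]
        norm_num
      · have hal : a = l⁻¹ := by have := sub_eq_zero.mp h; linarith
        have hdl : d = l := by
          rw [hd', hal]; ring
        have hdetP : (0 : ℝ) * 0 - (-1) * 1 = 1 := by norm_num
        refine ⟨mk2 0 (-1) 1 0 hdetP, ?_⟩
        rw [mul_inv_eq_iff_eq_mul]
        apply Subtype.ext
        show _ * D.val = M.val * _
        rw [hD, hM, mk2_val, Matrix.mul_fin_two, Matrix.mul_fin_two]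
        rw [hb0, hc0, hal, hdl]
        norm_num

/-- Case combinator. -/
lemma case_of (l : ℝ) (hl : 1 < l) (D : SL2R) (hD : D.val = !![l, 0; 0, l⁻¹])
    (G A A' : SL2R) (hAA' : A * A' = 1)
    (htrA : A.val 0 0 + A.val 1 1 = l + l⁻¹)
    (htrB : (A' * G).val 0 0 + (A' * G).val 1 1 = l + l⁻¹ ∨
            (A' * G).val 0 0 + (A' * G).val 1 1 = -(l + l⁻¹)) :
    ∃ h₁ h₂ : PSL2R, IsConj (QuotientGroup.mk D) h₁ ∧ IsConj (QuotientGroup.mk D) h₂ ∧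
      h₁ * h₂ = QuotientGroup.mk G := by
  set B := A' * G with hB
  have hA : IsConj D A := key l hl D hD A htrA
  have hconj1 : IsConj (QuotientGroup.mk D : PSL2R) (QuotientGroup.mk A) :=
    (QuotientGroup.mk' _).map_isConj hA
  have hconj2 : IsConj (QuotientGroup.mk D : PSL2R) (QuotientGroup.mk B) := by
    rcases htrB with h | h
    · exact (QuotientGroup.mk' _).map_isConj (key l hl D hD B h)
    · have hdetnB : Matrix.det (-B.val) = 1 := by
        have h2 : Matrix.det (-B.val) = (-1)^(2:ℕ) * Matrix.det B.val := by
          simpa using Matrix.det_neg B.val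
        rw [h2, B.2]; norm_num
      set C : SL2R := ⟨-B.val, hdetnB⟩ with hC
      have htrC : C.val 0 0 + C.val 1 1 = l + l⁻¹ := by
        show (-B.val) 0 0 + (-B.val) 1 1 = l + l⁻¹
        simp only [Matrix.neg_apply]
        linarith [h]
      have h3 : IsConj (QuotientGroup.mk D : PSL2R) (QuotientGroup.mk C) :=
        (QuotientGroup.mk' _).map_isConj (key l hl D hD C htrC)
      rwa [mk_eq_mk_of_neg B C rfl] at h3
  refine ⟨QuotientGroup.mk A, QuotientGroup.mk B, hconj1, hconj2, ?_⟩
  rw [← QuotientGroup.mk_mul, hB, ← mul_assoc, hAA', one_mul]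

theorem hyperbolic_class_square_eq_univ (l : ℝ) (hl : 1 < l)
    (D : Matrix.SpecialLinearGroup (Fin 2) ℝ) (hD : D.val = !![l, 0; 0, l⁻¹])
    (d : PSL2R) (hd : d = QuotientGroup.mk D) :
    ∀ g : PSL2R, ∃ h₁ h₂ : PSL2R, IsConj d h₁ ∧ IsConj d h₂ ∧ h₁ * h₂ = g := by
  subst hd
  intro g
  obtain ⟨G, rfl⟩ := QuotientGroup.mk_surjective g
  have l0 : l ≠ 0 := by positivity
  have hli : l * l⁻¹ = 1 := mul_inv_cancel₀ l0
  have hli' : l⁻¹ * l = 1 := by rw [mul_comm]; exact hli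
  set a := G.val 0 0 with ha
  set b := G.val 0 1 with hb
  set c := G.val 1 0 with hc
  set dd := G.val 1 1 with hdd
  have hG : G.val = !![a, b; c, dd] := by
    rw [ha, hb, hc, hdd]; exact Matrix.eta_fin_two G.val
  have hdet : a * dd - b * c = 1 := by
    have := G.2
    rw [hG, Matrix.det_fin_two_of] at this
    exact this
  set t := l + l⁻¹ with ht
  by_cases hc0 : c ≠ 0
  · set s := (l⁻¹ * a + l * dd - t) / c with hs
    have hdA : l * l⁻¹ - s * 0 = 1 := by rw [hli]; ring
    have hdA' : l⁻¹ * l - (-s) * 0 = 1 := by rw [hli']; ring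
    apply case_of l hl D hD G (mk2 l s 0 l⁻¹ hdA) (mk2 l⁻¹ (-s) 0 l hdA')
    · apply Subtype.ext
      show (!![l, s; 0, l⁻¹] : Matrix (Fin 2) (Fin 2) ℝ) * !![l⁻¹, -s; 0, l] = 1
      rw [Matrix.mul_fin_two, Matrix.one_fin_two]
      refine Matrix.ext fun i j => ?_
      fin_cases i <;> fin_cases j <;> simp [hli, hli'] <;> ring
    · simp
    · left
      have hBval : ((mk2 l⁻¹ (-s) 0 l hdA') * G).val = !![l⁻¹, -s; 0, l] * !![a, b; c, dd] := by
        show (mk2 l⁻¹ (-s) 0 l hdA').val * G.val = _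
        rw [mk2_val, hG]
      rw [hBval, Matrix.mul_fin_two]
      show l⁻¹ * a + -s * c + (0 * b + l * dd) = t
      rw [hs]
      field_simp
      ring
  · push_neg at hc0
    by_cases hb0 : b ≠ 0
    · set s := (l⁻¹ * a + l * dd - t) / b with hs
      have hdA : l * l⁻¹ - 0 * s = 1 := by rw [hli]; ring
      have hdA' : l⁻¹ * l - 0 * (-s) = 1 := by rw [hli']; ring
      apply case_of l hl D hD G (mk2 l 0 s l⁻¹ hdA) (mk2 l⁻¹ 0 (-s) l hdA')
      · apply Subtype.ext
        show (!![l, 0; s, l⁻¹] : Matrix (Fin 2) (Fin 2) ℝ) * !![l⁻¹, 0; -s, l] = 1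
        rw [Matrix.mul_fin_two, Matrix.one_fin_two]
        refine Matrix.ext fun i j => ?_
        fin_cases i <;> fin_cases j <;> simp [hli, hli'] <;> ring
      · simp
      · left
        have hBval : ((mk2 l⁻¹ 0 (-s) l hdA') * G).val = !![l⁻¹, 0; -s, l] * !![a, b; c, dd] := by
          show (mk2 l⁻¹ 0 (-s) l hdA').val * G.val = _
          rw [mk2_val, hG]
        rw [hBval, Matrix.mul_fin_two]
        show l⁻¹ * a + 0 * c + (-s * b + l * dd) = t
        rw [hs, hc0]
        field_simp
        ring
    · push_neg at hb0
      by_cases had : a ≠ dd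
      · set p := t * (1 - a) / (dd - a) with hp
        have hda : dd - a ≠ 0 := sub_ne_zero.mpr (Ne.symm had)
        have hdA : p * (t - p) - (p * (t - p) - 1) * 1 = 1 := by ring
        have hdA' : (t - p) * p - (-(p * (t - p) - 1)) * (-1) = 1 := by ring
        apply case_of l hl D hD G (mk2 p (p * (t - p) - 1) 1 (t - p) hdA)
          (mk2 (t - p) (-(p * (t - p) - 1)) (-1) p hdA')
        · apply Subtype.ext
          show (!![p, p * (t - p) - 1; 1, t - p] : Matrix (Fin 2) (Fin 2) ℝ) *
            !![t - p, -(p * (t - p) - 1); -1, p] = 1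
          rw [Matrix.mul_fin_two, Matrix.one_fin_two]
          refine Matrix.ext fun i j => ?_
          fin_cases i <;> fin_cases j <;> simp <;> ring
        · simp
          exact ht
        · left
          have hBval : ((mk2 (t - p) (-(p * (t - p) - 1)) (-1) p hdA') * G).val =
              !![t - p, -(p * (t - p) - 1); -1, p] * !![a, b; c, dd] := by
            show (mk2 (t - p) (-(p * (t - p) - 1)) (-1) p hdA').val * G.val = _
            rw [mk2_val, hG]
          rw [hBval, Matrix.mul_fin_two]
          show (t - p) * a + -(p * (t - p) - 1) * c + (-1 * b + p * dd) = t
          rw [hc0, hb0, hp]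
          field_simp
          ring
      · push_neg at had
        have hGcen : G ∈ Subgroup.center SL2R := by
          rw [Subgroup.mem_center_iff]
          intro H
          apply Subtype.ext
          show H.val * G.val = G.val * H.val
          rw [hG, hb0, hc0, ← had]
          have hsc : (!![a, 0; 0, a] : Matrix (Fin 2) (Fin 2) ℝ) = a • 1 := by
            rw [Matrix.one_fin_two, Matrix.smul_of]
            refine Matrix.ext fun i j => ?_
            fin_cases i <;> fin_cases j <;> simp
          rw [hsc, Matrix.mul_smul, Matrix.smul_mul, mul_one, one_mul]
        have hGone : (QuotientGroup.mk G : PSL2R) = 1 :=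
          (QuotientGroup.eq_one_iff G).mpr hGcen
        have hdA' : l⁻¹ * l - 0 * 0 = 1 := by rw [hli']; ring
        have h1 : D * (mk2 l⁻¹ 0 0 l hdA') = 1 := by
          apply Subtype.ext
          show D.val * _ = 1
          rw [hD, mk2_val, Matrix.mul_fin_two, Matrix.one_fin_two]
          refine Matrix.ext fun i j => ?_
          fin_cases i <;> fin_cases j <;> simp [hli, hli'] <;> ring
        refine ⟨QuotientGroup.mk D, QuotientGroup.mk (mk2 l⁻¹ 0 0 l hdA'), IsConj.refl _, ?_, ?_⟩
        · apply (QuotientGroup.mk' _).map_isConj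
          apply key l hl D hD
          show l⁻¹ + l = l + l⁻¹
          ring
        · rw [← QuotientGroup.mk_mul, h1, hGone]
          rfl
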